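/- Let G be a Polish group and X a stationary G-process. Then X is stochastically continuous if and only if for every E in the product σ-algebra ℬ^G the function G → [0,1], g ↦ ℙ_X(R_g⁻¹(E) △ E), is continuous. -/

import Mathlib

open MeasureTheory ProbabilityTheory Filter Topology symmDiff

noncomputable section

namespace Paper

variable {G : Type*} {Ω : Type*}

/-- The distribution of a `G`-process: the pushforward of `P` on `ℝ^G`. -/
def procLaw [MeasurableSpace Ω] (P : Measure Ω) (X : G → Ω → ℝ) : Measure (G → ℝ) :=
  Measure.map (fun ω g => X g ω) P

/-- The left translation `R_g` of `ℝ^G`, `R_g((x_h)_h) = (x_{g⁻¹ h})_h`. -/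
def shiftMap [Group G] (g : G) : (G → ℝ) → G → ℝ := fun x h => x (g⁻¹ * h)

/-- The (possibly non-invertible) right-style translation `Q_g((x_h)_h) = (x_{g h})_h`. -/
def transMap [Mul G] (g : G) : (G → ℝ) → G → ℝ := fun x h => x (g * h)

/-- (Left) stationarity of a `G`-process. -/
def Stationary [Mul G] [MeasurableSpace Ω] (P : Measure Ω) (X : G → Ω → ℝ) : Prop :=
  ∀ g : G, procLaw P (fun h => X (g * h)) = procLaw P X

/-- Ergodicity of a stationary `G`-process: every a.s. translation-invariant measurable set
in `ℝ^G` has law-measure `0` or `1`. -/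
def ErgodicProcess [Group G] [MeasurableSpace Ω] (P : Measure Ω) (X : G → Ω → ℝ) : Prop :=
  ∀ E : Set (G → ℝ), MeasurableSet E →
    (∀ g : G, procLaw P X ((shiftMap g ⁻¹' E) ∆ E) = 0) →
    procLaw P X E = 0 ∨ procLaw P X E = 1

/-- Weak mixing of a stationary `G`-process: the diagonal product system
`{R_g × R_g}` on `(ℝ^G × ℝ^G, ℙ_X ⊗ ℙ_X)` is ergodic. -/
def WeaklyMixingProcess [Group G] [MeasurableSpace Ω] (P : Measure Ω) (X : G → Ω → ℝ) : Prop :=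
  ∀ E : Set ((G → ℝ) × (G → ℝ)), MeasurableSet E →
    (∀ g : G, ((procLaw P X).prod (procLaw P X))
        (((fun p => (shiftMap g p.1, shiftMap g p.2)) ⁻¹' E) ∆ E) = 0) →
    ((procLaw P X).prod (procLaw P X)) E = 0 ∨ ((procLaw P X).prod (procLaw P X)) E = 1

/-- Separability in probability of a `G`-process. -/
def SeparableInProbability [MeasurableSpace Ω] (P : Measure Ω) (X : G → Ω → ℝ) : Prop :=
  ∃ S : Set G, S.Countable ∧
    ∀ g : G, ∃ s : ℕ → G, (∀ n, s n ∈ S) ∧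
      TendstoInMeasure P (fun n => X (s n)) atTop (X g)

/-- The finite dimensional distribution of the process along `gs : Fin n → G`. -/
def fdd [MeasurableSpace Ω] (P : Measure Ω) (X : G → Ω → ℝ) {n : ℕ} (gs : Fin n → G) :
    Measure (Fin n → ℝ) :=
  Measure.map (fun ω i => X (gs i) ω) P

/-- A measure on `ℝⁿ` is infinitely divisible if for every `m` it is the `m`-fold
convolution power of some probability measure. -/
def InfinitelyDivisible {n : ℕ} (μ : Measure (Fin n → ℝ)) : Prop :=
  ∀ m : ℕ, 0 < m → ∃ ν : Measure (Fin n → ℝ), IsProbabilityMeasure ν ∧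
    μ = Measure.map (fun x : Fin m → Fin n → ℝ => ∑ i, x i) (Measure.pi fun _ => ν)

/-- A `G`-process is infinitely divisible if all its finite dimensional
distributions are infinitely divisible. -/
def InfinitelyDivisibleProcess [MeasurableSpace Ω] (P : Measure Ω) (X : G → Ω → ℝ) : Prop :=
  ∀ (n : ℕ) (gs : Fin n → G), InfinitelyDivisible (fdd P X gs)

/-- Stochastic continuity of a process indexed by a topological group (or semigroup). -/
def StochasticallyContinuous [TopologicalSpace G] [MeasurableSpace Ω]
    (P : Measure Ω) (X : G → Ω → ℝ) : Prop :=
  ∀ g₀ : G, TendstoInMeasure P X (𝓝 g₀) (X g₀)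

/-- All finite dimensional characteristic functions of the process are nowhere vanishing. -/
def CharFunNonVanishing [MeasurableSpace Ω] (P : Measure Ω) (X : G → Ω → ℝ) : Prop :=
  ∀ (n : ℕ) (gs : Fin n → G) (t : Fin n → ℝ),
    (∫ x, Complex.exp (Complex.I * ((∑ i, t i * x i : ℝ) : ℂ)) ∂(fdd P X gs)) ≠ 0

/-- A measure on `ℝⁿ` is a (possibly degenerate) Gaussian measure iff each of its
one-dimensional linear-functional pushforwards is a real Gaussian. -/
def IsGaussianMeasure {n : ℕ} (μ : Measure (Fin n → ℝ)) : Prop :=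
  ∀ t : Fin n → ℝ, ∃ (m : ℝ) (v : NNReal),
    Measure.map (fun x => ∑ i, t i * x i) μ = gaussianReal m v

/-- A Gaussian `G`-process: all finite dimensional distributions are
(possibly degenerate) Gaussian. -/
def GaussianProcess [MeasurableSpace Ω] (P : Measure Ω) (X : G → Ω → ℝ) : Prop :=
  ∀ (n : ℕ) (gs : Fin n → G), IsGaussianMeasure (fdd P X gs)

/-- Ergodicity of a probability preserving `Θ`-system (maps need not be invertible). -/
def ErgodicSystem {Θ 𝕏 : Type*} [MeasurableSpace 𝕏] (ξ : Measure 𝕏) (T : Θ → 𝕏 → 𝕏) : Prop :=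
  ∀ A : Set 𝕏, MeasurableSet A → (∀ θ : Θ, ξ ((T θ ⁻¹' A) ∆ A) = 0) →
    ξ A = 0 ∨ ξ A = 1

/-- A probability preserving automorphism: a bi-measurable measure-preserving bijection
between full-measure measurable subsets. -/
def IsPPAutomorphism [MeasurableSpace Ω] (P : Measure Ω) (T : Ω → Ω) : Prop :=
  Measurable T ∧ (∀ A : Set Ω, MeasurableSet A → P (T ⁻¹' A) = P A) ∧
  ∃ (A B : Set Ω) (σ : Ω → Ω), MeasurableSet A ∧ MeasurableSet B ∧
    P A = 1 ∧ P B = 1 ∧ Measurable σ ∧ Set.MapsTo T A B ∧ Set.MapsTo σ B A ∧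
    Set.InvOn σ T A B


section Aux

open scoped ENNReal
set_option linter.unusedSectionVars false

variable {G : Type*} [Group G] {Ω : Type*} [MeasurableSpace Ω]

lemma measurable_shiftMap (g : G) : Measurable (shiftMap (G := G) g) :=
  measurable_pi_lambda _ fun _ => measurable_pi_apply _

lemma shiftMap_comp_shiftMap (a b : G) :
    shiftMap (G := G) a ∘ shiftMap b = shiftMap (a * b) := by
  funext x h
  simp [shiftMap, mul_assoc]

lemma shiftMap_one_eq : shiftMap (G := G) 1 = id := by
  funext x h
  simp [shiftMap]

lemma measurable_proc (X : G → Ω → ℝ) (hmeas : ∀ g, Measurable (X g)) :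
    Measurable fun ω (g : G) => X g ω :=
  measurable_pi_lambda _ hmeas

lemma procLaw_isProb (P : Measure Ω) [IsProbabilityMeasure P] (X : G → Ω → ℝ)
    (hmeas : ∀ g, Measurable (X g)) : IsProbabilityMeasure (procLaw P X) :=
  Measure.isProbabilityMeasure_map (measurable_proc X hmeas).aemeasurable

lemma map_shiftMap_procLaw (P : Measure Ω) (X : G → Ω → ℝ)
    (hmeas : ∀ g, Measurable (X g)) (hstat : Stationary P X) (g : G) :
    Measure.map (shiftMap g) (procLaw P X) = procLaw P X := by
  rw [procLaw, Measure.map_map (measurable_shiftMap g) (measurable_proc X hmeas)]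
  have h1 : (shiftMap g ∘ fun ω (h : G) => X h ω) = fun ω (h : G) => X (g⁻¹ * h) ω := rfl
  rw [h1]
  exact hstat g⁻¹

lemma procLaw_shift_preimage (P : Measure Ω) (X : G → Ω → ℝ)
    (hmeas : ∀ g, Measurable (X g)) (hstat : Stationary P X) (g : G)
    {S : Set (G → ℝ)} (hS : MeasurableSet S) :
    procLaw P X (shiftMap g ⁻¹' S) = procLaw P X S := by
  rw [← Measure.map_apply (measurable_shiftMap g) hS,
    map_shiftMap_procLaw P X hmeas hstat g]

lemma law_coord (P : Measure Ω) (X : G → Ω → ℝ)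
    (hmeas : ∀ g, Measurable (X g)) (hstat : Stationary P X) (a : G) :
    Measure.map (X a) P = Measure.map (X 1) P := by
  have h1 : Measure.map (fun x : G → ℝ => x 1) (procLaw P (fun h => X (a * h)))
      = Measure.map (X a) P := by
    rw [procLaw, Measure.map_map (measurable_pi_apply 1)
      (measurable_proc _ fun h => hmeas (a * h))]
    have : ((fun x : G → ℝ => x 1) ∘ fun ω (h : G) => X (a * h) ω) = X (a * 1) := rfl
    rw [this, mul_one]
  have h2 : Measure.map (fun x : G → ℝ => x 1) (procLaw P X) = Measure.map (X 1) P := by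
    rw [procLaw, Measure.map_map (measurable_pi_apply 1) (measurable_proc X hmeas)]
    rfl
  rw [← h1, hstat a, h2]

lemma biUnion_symmDiff_subset {ι α : Type*} (s : Finset ι) (A B : ι → Set α) :
    ((⋃ i ∈ s, A i) ∆ (⋃ i ∈ s, B i)) ⊆ ⋃ i ∈ s, (A i ∆ B i) := by
  intro x hx
  rw [Set.mem_symmDiff] at hx
  rcases hx with ⟨h1, h2⟩ | ⟨h1, h2⟩
  · simp only [Set.mem_iUnion] at h1 h2 ⊢
    obtain ⟨i, hi, hAi⟩ := h1
    exact ⟨i, hi, Set.mem_symmDiff.2 (Or.inl ⟨hAi, fun hb => h2 ⟨i, hi, hb⟩⟩)⟩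
  · simp only [Set.mem_iUnion] at h1 h2 ⊢
    obtain ⟨i, hi, hBi⟩ := h1
    exact ⟨i, hi, Set.mem_symmDiff.2 (Or.inr ⟨hBi, fun hb => h2 ⟨i, hi, hb⟩⟩)⟩

/-- The key analytic lemma: for a stationary stochastically continuous process, the
symmetric difference of one-coordinate cylinder events tends to zero. -/
lemma tendsto_symmDiff_cylinder [TopologicalSpace G] [IsTopologicalGroup G]
    (P : Measure Ω) [IsProbabilityMeasure P] (X : G → Ω → ℝ)
    (hmeas : ∀ g, Measurable (X g)) (hstat : Stationary P X)
    (hsc : StochasticallyContinuous P X) (h : G) {B : Set ℝ} (hB : MeasurableSet B) :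
    Tendsto (fun g : G => P (({ω | X (g⁻¹ * h) ω ∈ B}) ∆ ({ω | X h ω ∈ B})))
      (𝓝 1) (𝓝 0) := by
  set ν : Measure ℝ := Measure.map (X 1) P with hν
  have hνprob : IsProbabilityMeasure ν := Measure.isProbabilityMeasure_map (hmeas 1).aemeasurable
  have hlaw : ∀ a : G, Measure.map (X a) P = ν := fun a => law_coord P X hmeas hstat a
  rw [ENNReal.tendsto_nhds_zero]
  intro ε hε
  have hε8 : (0 : ℝ≥0∞) < ε / 8 := ENNReal.div_pos hε.ne' (by norm_num)
  obtain ⟨C, hCB, hCc, hC⟩ := hB.exists_isCompact_diff_lt (measure_ne_top ν B) hε8.ne'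
  obtain ⟨U, hBU, hUo, _, hU⟩ := hB.exists_isOpen_diff_lt (measure_ne_top ν B) hε8.ne'
  obtain ⟨δ, hδpos, hδ⟩ := hCc.exists_thickening_subset_open hUo (hCB.trans hBU)
  have hgh : Tendsto (fun g : G => g⁻¹ * h) (𝓝 1) (𝓝 h) := by
    have hcont : Continuous fun g : G => g⁻¹ * h := continuous_inv.mul continuous_const
    simpa using hcont.tendsto 1
  have hdist : Tendsto (fun g : G => P {ω | δ ≤ dist (X (g⁻¹ * h) ω) (X h ω)})
      (𝓝 1) (𝓝 0) := (tendstoInMeasure_iff_dist.mp (hsc h) δ hδpos).comp hgh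
  have hCm : MeasurableSet C := hCc.isClosed.measurableSet
  have hBC : ν (B \ C) ≤ ε / 8 := hC.le
  have hUB : ν (U \ B) ≤ ε / 8 := hU.le
  have hPev := ENNReal.tendsto_nhds_zero.mp hdist (ε / 8) hε8
  filter_upwards [hPev] with g hg
  set a := g⁻¹ * h with ha
  have hsub : (({ω | X a ω ∈ B}) ∆ ({ω | X h ω ∈ B})) ⊆
      ({ω | X a ω ∈ B \ C} ∪ {ω | X h ω ∈ U \ B} ∪ {ω | X h ω ∈ B \ C}
        ∪ {ω | X a ω ∈ U \ B}) ∪ {ω | δ ≤ dist (X a ω) (X h ω)} := by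
    intro ω hω
    rw [Set.mem_symmDiff] at hω
    simp only [Set.mem_union, Set.mem_setOf_eq, Set.mem_diff]
    rcases hω with ⟨h1, h2⟩ | ⟨h1, h2⟩
    · by_cases hc : X a ω ∈ C
      · by_cases hu : X h ω ∈ U
        · exact Or.inl (Or.inl (Or.inl (Or.inr ⟨hu, h2⟩)))
        · refine Or.inr ?_
          have hnt : X h ω ∉ Metric.thickening δ C := fun ht => hu (hδ ht)
          rw [Metric.mem_thickening_iff] at hnt
          push_neg at hnt
          have := hnt _ hc
          rw [dist_comm] at this
          linarith
      · exact Or.inl (Or.inl (Or.inl (Or.inl ⟨h1, hc⟩)))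
    · by_cases hc : X h ω ∈ C
      · by_cases hu : X a ω ∈ U
        · exact Or.inl (Or.inr ⟨hu, h2⟩)
        · refine Or.inr ?_
          have hnt : X a ω ∉ Metric.thickening δ C := fun ht => hu (hδ ht)
          rw [Metric.mem_thickening_iff] at hnt
          push_neg at hnt
          have := hnt _ hc
          linarith
      · exact Or.inl (Or.inl (Or.inr ⟨h1, hc⟩))
  have hval : ∀ (b : G) (S : Set ℝ), MeasurableSet S → P {ω | X b ω ∈ S} = ν S := by
    intro b S hS
    rw [← hlaw b, Measure.map_apply (hmeas b) hS]
    rfl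
  have hBCm : MeasurableSet (B \ C) := hB.diff hCm
  have hUBm : MeasurableSet (U \ B) := hUo.measurableSet.diff hB
  calc P (({ω | X a ω ∈ B}) ∆ ({ω | X h ω ∈ B}))
      ≤ P ({ω | X a ω ∈ B \ C} ∪ {ω | X h ω ∈ U \ B} ∪ {ω | X h ω ∈ B \ C}
          ∪ {ω | X a ω ∈ U \ B}) + P {ω | δ ≤ dist (X a ω) (X h ω)} :=
        (measure_mono hsub).trans (measure_union_le _ _)
    _ ≤ (P ({ω | X a ω ∈ B \ C} ∪ {ω | X h ω ∈ U \ B} ∪ {ω | X h ω ∈ B \ C})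
          + P {ω | X a ω ∈ U \ B}) + P {ω | δ ≤ dist (X a ω) (X h ω)} := by
        gcongr
        exact measure_union_le _ _
    _ ≤ ((P ({ω | X a ω ∈ B \ C} ∪ {ω | X h ω ∈ U \ B}) + P {ω | X h ω ∈ B \ C})
          + P {ω | X a ω ∈ U \ B}) + P {ω | δ ≤ dist (X a ω) (X h ω)} := by
        gcongr
        exact measure_union_le _ _
    _ ≤ (((P {ω | X a ω ∈ B \ C} + P {ω | X h ω ∈ U \ B}) + P {ω | X h ω ∈ B \ C})
          + P {ω | X a ω ∈ U \ B}) + P {ω | δ ≤ dist (X a ω) (X h ω)} := by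
        gcongr
        exact measure_union_le _ _
    _ ≤ (((ε / 8 + ε / 8) + ε / 8) + ε / 8) + ε / 8 := by
        rw [hval a _ hBCm, hval h _ hUBm, hval h _ hBCm, hval a _ hUBm]
        gcongr
    _ ≤ ε := by
        have h58 : (((ε / 8 + ε / 8) + ε / 8) + ε / 8) + ε / 8 = 5 * (ε / 8) := by ring
        rw [h58]
        calc (5 : ℝ≥0∞) * (ε / 8) ≤ 8 * (ε / 8) := by gcongr <;> norm_num
          _ = ε := ENNReal.mul_div_cancel' (by norm_num) (by norm_num)

/-- Auxiliary: build a measurable space structure from a predicate closed under the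
σ-algebra operations. -/
def goodMS {α : Type*} (T : Set α → Prop) (h0 : T ∅) (hc : ∀ E, T E → T Eᶜ)
    (hu : ∀ f : ℕ → Set α, (∀ n, T (f n)) → T (⋃ n, f n)) : MeasurableSpace α where
  MeasurableSet' := T
  measurableSet_empty := h0
  measurableSet_compl := hc
  measurableSet_iUnion := hu

/-- The measure of the symmetric difference of a translate of any measurable set with
the set itself tends to zero at the identity, for stationary stochastically continuous
processes. -/
lemma tendsto_symmDiff_of_stochCont [TopologicalSpace G] [IsTopologicalGroup G]
    (P : Measure Ω) [IsProbabilityMeasure P] (X : G → Ω → ℝ)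
    (hmeas : ∀ g, Measurable (X g)) (hstat : Stationary P X)
    (hsc : StochasticallyContinuous P X) :
    ∀ E : Set (G → ℝ), MeasurableSet E →
      Tendsto (fun g : G => procLaw P X ((shiftMap g ⁻¹' E) ∆ E)) (𝓝 1) (𝓝 0) := by
  set μ := procLaw P X with hμdef
  haveI hμprob : IsProbabilityMeasure μ := procLaw_isProb P X hmeas
  have hinv : ∀ (g : G) {S : Set (G → ℝ)}, MeasurableSet S →
      μ (shiftMap g ⁻¹' S) = μ S := fun g _ hS =>
    procLaw_shift_preimage P X hmeas hstat g hS
  set T : Set (G → ℝ) → Prop := fun E => MeasurableSet E ∧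
      Tendsto (fun g : G => μ ((shiftMap g ⁻¹' E) ∆ E)) (𝓝 1) (𝓝 0) with hTdef
  have hT0 : T ∅ := ⟨MeasurableSet.empty, by
    simp only [Set.preimage_empty, symmDiff_self, Set.bot_eq_empty, measure_empty]
    exact tendsto_const_nhds⟩
  have hTc : ∀ E, T E → T Eᶜ := by
    rintro E ⟨hE, hT⟩
    refine ⟨hE.compl, ?_⟩
    have heq : ∀ g : G, (shiftMap g ⁻¹' Eᶜ) ∆ Eᶜ = (shiftMap g ⁻¹' E) ∆ E := by
      intro g
      rw [Set.preimage_compl, compl_symmDiff_compl]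
    simpa only [heq] using hT
  have hTu : ∀ f : ℕ → Set (G → ℝ), (∀ n, T (f n)) → T (⋃ n, f n) := by
    intro f hf
    refine ⟨MeasurableSet.iUnion fun n => (hf n).1, ?_⟩
    rw [ENNReal.tendsto_nhds_zero]
    intro ε hε
    set A := ⋃ n, f n with hA
    have hAm : MeasurableSet A := MeasurableSet.iUnion fun n => (hf n).1
    set F : ℕ → Set (G → ℝ) := fun N => ⋃ n ∈ Finset.range N, f n with hF
    have hFm : ∀ N, MeasurableSet (F N) := fun N =>
      (Finset.range N).measurableSet_biUnion fun n _ => (hf n).1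
    have hFA : ∀ N, F N ⊆ A := fun N =>
      Set.iUnion₂_subset fun n _ => Set.subset_iUnion f n
    have hmono : Monotone F := fun i j hij =>
      Set.biUnion_subset_biUnion_left (Finset.range_subset_range.2 hij)
    have hUF : ⋃ N, F N = A := by
      refine Set.Subset.antisymm (Set.iUnion_subset fun N => hFA N) ?_
      refine Set.iUnion_subset fun n => ?_
      exact (Set.subset_biUnion_of_mem (Finset.self_mem_range_succ n)).trans
        (Set.subset_iUnion F (n + 1))
    have hμF : Tendsto (fun N => μ (F N)) atTop (𝓝 (μ A)) := by
      have ht := tendsto_measure_iUnion_atTop (μ := μ) hmono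
      rwa [hUF] at ht
    have hdiff : Tendsto (fun N => μ (A \ F N)) atTop (𝓝 0) := by
      have h4 : (fun N => μ (A \ F N)) = fun N => μ A - μ (F N) := by
        funext N
        exact measure_diff (hFA N) (hFm N).nullMeasurableSet (measure_ne_top μ _)
      rw [h4]
      have := ENNReal.Tendsto.sub (tendsto_const_nhds (x := μ A) (f := atTop)) hμF
        (Or.inl (measure_ne_top μ A))
      simpa using this
    have hquarter : (0 : ℝ≥0∞) < ε / 2 / 2 :=
      ENNReal.half_pos (ENNReal.half_pos hε.ne').ne'
    obtain ⟨N, hN⟩ := (ENNReal.tendsto_nhds_zero.mp hdiff (ε / 2 / 2) hquarter).exists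
    have hsum : Tendsto
        (fun g : G => ∑ n ∈ Finset.range N, μ ((shiftMap g ⁻¹' f n) ∆ f n))
        (𝓝 1) (𝓝 0) := by
      have := tendsto_finset_sum (Finset.range N)
        (fun n (_ : n ∈ Finset.range N) => (hf n).2)
      simpa using this
    filter_upwards [ENNReal.tendsto_nhds_zero.mp hsum (ε / 2)
      (ENNReal.half_pos hε.ne')] with g hg
    have hAF : μ (A ∆ F N) ≤ ε / 2 / 2 := by
      rw [symmDiff_of_ge (hFA N)]
      exact hN
    have h2 : μ ((shiftMap g ⁻¹' A) ∆ (shiftMap g ⁻¹' F N)) ≤ ε / 2 / 2 := by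
      rw [← Set.preimage_symmDiff, hinv g (hAm.symmDiff (hFm N))]
      exact hAF
    have h3 : μ ((shiftMap g ⁻¹' F N) ∆ F N) ≤ ε / 2 := by
      have hpre : shiftMap g ⁻¹' F N = ⋃ n ∈ Finset.range N, shiftMap g ⁻¹' f n := by
        simp [hF, Set.preimage_iUnion]
      have hsub2 : ((shiftMap g ⁻¹' F N) ∆ F N) ⊆
          ⋃ n ∈ Finset.range N, ((shiftMap g ⁻¹' f n) ∆ f n) := by
        rw [hpre]
        exact biUnion_symmDiff_subset _ _ _
      exact ((measure_mono hsub2).trans (measure_biUnion_finset_le _ _)).trans hg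
    calc μ ((shiftMap g ⁻¹' A) ∆ A)
        ≤ μ ((shiftMap g ⁻¹' A) ∆ (shiftMap g ⁻¹' F N)) +
          μ ((shiftMap g ⁻¹' F N) ∆ A) := measure_symmDiff_le _ _ _
      _ ≤ μ ((shiftMap g ⁻¹' A) ∆ (shiftMap g ⁻¹' F N)) +
          (μ ((shiftMap g ⁻¹' F N) ∆ F N) + μ (F N ∆ A)) := by
          gcongr
          exact measure_symmDiff_le _ _ _
      _ ≤ ε / 2 / 2 + (ε / 2 + ε / 2 / 2) := by
          gcongr
          rw [symmDiff_comm]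
          exact hAF
      _ ≤ ε := by
          calc ε / 2 / 2 + (ε / 2 + ε / 2 / 2)
              = (ε / 2 / 2 + ε / 2 / 2) + ε / 2 := by ring
            _ = ε / 2 + ε / 2 := by rw [ENNReal.add_halves]
            _ = ε := ENNReal.add_halves ε
            _ ≤ ε := le_rfl
  have hcyl : ∀ (a : G) (B : Set ℝ), MeasurableSet B →
      T ((fun x : G → ℝ => x a) ⁻¹' B) := by
    intro a B hB
    refine ⟨measurable_pi_apply a hB, ?_⟩
    have key : (fun g : G => μ ((shiftMap g ⁻¹' ((fun x : G → ℝ => x a) ⁻¹' B))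
        ∆ ((fun x : G → ℝ => x a) ⁻¹' B)))
        = fun g : G => P (({ω | X (g⁻¹ * a) ω ∈ B}) ∆ ({ω | X a ω ∈ B})) := by
      funext g
      have h1 : shiftMap g ⁻¹' ((fun x : G → ℝ => x a) ⁻¹' B)
          = (fun x : G → ℝ => x (g⁻¹ * a)) ⁻¹' B := rfl
      have hm1 : MeasurableSet ((((fun x : G → ℝ => x (g⁻¹ * a)) ⁻¹' B) : Set (G → ℝ))
          ∆ ((fun x : G → ℝ => x a) ⁻¹' B)) := by
        have hma : MeasurableSet ((fun x : G → ℝ => x (g⁻¹ * a)) ⁻¹' B) :=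
          measurable_pi_apply _ hB
        have hmb : MeasurableSet ((fun x : G → ℝ => x a) ⁻¹' B) :=
          measurable_pi_apply _ hB
        exact hma.symmDiff hmb
      rw [h1, hμdef, procLaw, Measure.map_apply (measurable_proc X hmeas) hm1,
        Set.preimage_symmDiff]
      rfl
    rw [key]
    exact tendsto_symmDiff_cylinder P X hmeas hstat hsc a hB
  have hle : (MeasurableSpace.pi : MeasurableSpace (G → ℝ)) ≤ goodMS T hT0 hTc hTu := by
    refine iSup_le fun a => ?_
    rw [MeasurableSpace.comap_le_iff_le_map]
    intro B hB
    exact hcyl a B hB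
  intro E hE
  exact (hle E hE).2

end Aux


/-- Hoffmann-Jørgensen/Pursley, group case: a stationary process over a
Polish group `G` is stochastically continuous iff for every `E ∈ ℬ^G` the map
`g ↦ ℙ_X(R_g⁻¹(E) ∆ E)` is continuous. -/
theorem stochasticallyContinuous_iff_continuous_symmDiff
    {G : Type*} [Group G] [TopologicalSpace G] [IsTopologicalGroup G] [PolishSpace G]
    {Ω : Type*} [MeasurableSpace Ω] (P : Measure Ω) [IsProbabilityMeasure P]
    (X : G → Ω → ℝ) (hmeas : ∀ g, Measurable (X g)) (hstat : Stationary P X) :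
    StochasticallyContinuous P X ↔
      ∀ E : Set (G → ℝ), MeasurableSet E →
        Continuous fun g : G => procLaw P X ((shiftMap g ⁻¹' E) ∆ E) := by
  set μ := procLaw P X with hμdef
  haveI hμprob : IsProbabilityMeasure μ := procLaw_isProb P X hmeas
  constructor
  · -- Forward direction
    intro hsc E hE
    have hgood := tendsto_symmDiff_of_stochCont P X hmeas hstat hsc
    rw [continuous_iff_continuousAt]
    intro g₀
    set φ : G → ENNReal := fun g => μ ((shiftMap g ⁻¹' E) ∆ E) with hφ
    have hφfin : φ g₀ ≠ ⊤ := measure_ne_top μ _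
    have : Tendsto φ (𝓝 g₀) (𝓝 (φ g₀)) := by
      rw [ENNReal.tendsto_nhds hφfin]
      intro ε hε
      set F := shiftMap g₀ ⁻¹' E with hFdef
      have hFm : MeasurableSet F := measurable_shiftMap g₀ hE
      have hψ : Tendsto (fun g : G => μ ((shiftMap (g₀⁻¹ * g) ⁻¹' F) ∆ F))
          (𝓝 g₀) (𝓝 0) := by
        have h1 : Tendsto (fun g : G => g₀⁻¹ * g) (𝓝 g₀) (𝓝 1) := by
          have hcg : Continuous fun g : G => g₀⁻¹ * g := continuous_const.mul continuous_id
          have := hcg.tendsto g₀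
          simpa using this
        exact (hgood F hFm).comp h1
      filter_upwards [ENNReal.tendsto_nhds_zero.mp hψ ε hε] with g hg
      have hpre : shiftMap g ⁻¹' E = shiftMap (g₀⁻¹ * g) ⁻¹' F := by
        rw [hFdef, ← Set.preimage_comp, shiftMap_comp_shiftMap]
        simp
      rw [Set.mem_Icc]
      constructor
      · rw [tsub_le_iff_right]
        calc φ g₀ ≤ μ (F ∆ (shiftMap g ⁻¹' E)) + μ ((shiftMap g ⁻¹' E) ∆ E) :=
              measure_symmDiff_le _ _ _
          _ ≤ ε + φ g := by
              gcongr
              rw [symmDiff_comm, hpre]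
              exact hg
          _ = φ g + ε := add_comm _ _
      · calc φ g ≤ μ ((shiftMap g ⁻¹' E) ∆ F) + μ (F ∆ E) := measure_symmDiff_le _ _ _
          _ ≤ ε + φ g₀ := by
              gcongr
              rw [hpre]
              exact hg
          _ = φ g₀ + ε := add_comm _ _
    exact this
  · -- Backward direction
    intro hcont g₀
    refine tendstoInMeasure_iff_dist.mpr fun ε hε => ?_
    -- the symmetric differences of half-space cylinders tend to zero at the identity
    have hD : ∀ a : ℝ, Tendsto
        (fun c : G => μ ((shiftMap c ⁻¹' {x : G → ℝ | x 1 < a}) ∆ {x : G → ℝ | x 1 < a}))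
        (𝓝 1) (𝓝 0) := by
      intro a
      have hEa : MeasurableSet {x : G → ℝ | x 1 < a} :=
        measurableSet_lt (measurable_pi_apply 1) measurable_const
      have h0 : μ ((shiftMap (1 : G) ⁻¹' {x : G → ℝ | x 1 < a}) ∆ {x : G → ℝ | x 1 < a})
          = 0 := by
        rw [shiftMap_one_eq]
        simp
      have hT := (hcont _ hEa).tendsto 1
      rwa [h0] at hT
    -- tails
    have htail : ∀ η : ENNReal, 0 < η → ∃ M : ℝ, μ {x : G → ℝ | M < |x 1|} ≤ η := by
      intro η hη
      have hI : ⋂ n : ℕ, {x : G → ℝ | (n : ℝ) < |x 1|} = ∅ := by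
        ext x
        simp only [Set.mem_iInter, Set.mem_setOf_eq, Set.mem_empty_iff_false, iff_false]
        push_neg
        obtain ⟨n, hn⟩ := exists_nat_gt |x 1|
        exact ⟨n, hn.le⟩
      have hmeasn : ∀ n : ℕ, NullMeasurableSet {x : G → ℝ | (n : ℝ) < |x 1|} μ := fun n =>
        (measurableSet_lt measurable_const (measurable_pi_apply 1).abs).nullMeasurableSet
      have hanti : Antitone fun n : ℕ => {x : G → ℝ | (n : ℝ) < |x 1|} := by
        intro m n hmn x hx
        simp only [Set.mem_setOf_eq] at hx ⊢
        have : (m : ℝ) ≤ (n : ℝ) := by exact_mod_cast hmn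
        linarith
      have hiT := tendsto_measure_iInter_atTop (μ := μ) hmeasn hanti ⟨0, measure_ne_top μ _⟩
      rw [hI] at hiT
      simp only [measure_empty] at hiT
      obtain ⟨n, hn⟩ := (ENNReal.tendsto_nhds_zero.mp hiT η hη).exists
      exact ⟨(n : ℝ), hn⟩
    -- key: convergence at the identity
    have hkey : Tendsto (fun c : G => μ {x : G → ℝ | ε ≤ dist (x c⁻¹) (x 1)})
        (𝓝 1) (𝓝 0) := by
      rw [ENNReal.tendsto_nhds_zero]
      intro η hη
      have hq : (0 : ENNReal) < η / 2 / 2 := ENNReal.half_pos (ENNReal.half_pos hη.ne').ne'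
      obtain ⟨M, hM⟩ := htail (η / 2 / 2) hq
      set ε' : ℝ := ε / 2 with hε'def
      have hε'pos : 0 < ε' := half_pos hε
      set N : ℕ := ⌈(|M| + ε) / ε'⌉₊ + 1 with hNdef
      set Ks : Finset ℤ := Finset.Icc (-(N : ℤ)) (N : ℤ) with hKs
      have hsum : Tendsto (fun c : G => ∑ k ∈ Ks,
          μ ((shiftMap c ⁻¹' {x : G → ℝ | x 1 < (k : ℝ) * ε'})
            ∆ {x : G → ℝ | x 1 < (k : ℝ) * ε'})) (𝓝 1) (𝓝 0) := by
        have := tendsto_finset_sum Ks (fun k (_ : k ∈ Ks) => hD ((k : ℝ) * ε'))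
        simpa using this
      have htailc : ∀ c : G, μ {x : G → ℝ | M < |x c⁻¹|} ≤ η / 2 / 2 := by
        intro c
        have hTm : MeasurableSet {x : G → ℝ | M < |x 1|} :=
          measurableSet_lt measurable_const (measurable_pi_apply 1).abs
        have hpre : shiftMap c ⁻¹' {x : G → ℝ | M < |x 1|} = {x : G → ℝ | M < |x c⁻¹|} := by
          ext x
          simp [shiftMap]
        calc μ {x : G → ℝ | M < |x c⁻¹|} = μ {x : G → ℝ | M < |x 1|} := by
              rw [← hpre, procLaw_shift_preimage P X hmeas hstat c hTm]
          _ ≤ η / 2 / 2 := hM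
      filter_upwards [ENNReal.tendsto_nhds_zero.mp hsum (η / 2)
        (ENNReal.half_pos hη.ne')] with c hc
      have hsub : {x : G → ℝ | ε ≤ dist (x c⁻¹) (x 1)} ⊆
          ({x : G → ℝ | M < |x c⁻¹|} ∪ {x : G → ℝ | M < |x 1|}) ∪
          ⋃ k ∈ Ks, ((shiftMap c ⁻¹' {x : G → ℝ | x 1 < (k : ℝ) * ε'})
            ∆ {x : G → ℝ | x 1 < (k : ℝ) * ε'}) := by
        intro x hx
        simp only [Set.mem_setOf_eq, Real.dist_eq] at hx
        by_cases h1 : M < |x c⁻¹|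
        · exact Or.inl (Or.inl h1)
        by_cases h2 : M < |x 1|
        · exact Or.inl (Or.inr h2)
        push_neg at h1 h2
        have hY1 : -M ≤ x c⁻¹ := neg_le_of_abs_le h1
        have hY2 : x c⁻¹ ≤ M := le_of_abs_le h1
        have hZ1 : -M ≤ x 1 := neg_le_of_abs_le h2
        have hZ2 : x 1 ≤ M := le_of_abs_le h2
        have hMabs : M ≤ |M| := le_abs_self M
        set m : ℝ := min (x c⁻¹) (x 1) with hm
        set k : ℤ := ⌊m / ε'⌋ + 1 with hk
        have hf1 : (⌊m / ε'⌋ : ℝ) ≤ m / ε' := Int.floor_le _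
        have hf2 : m / ε' < (⌊m / ε'⌋ : ℝ) + 1 := Int.lt_floor_add_one _
        have hmle : m ≤ |M| + ε := by
          have : m ≤ M := le_trans (min_le_left _ _) hY2
          linarith
        have hmge : -(|M| + ε) ≤ m := by
          have : -M ≤ m := le_min hY1 hZ1
          linarith
        have hd1 : m / ε' ≤ (|M| + ε) / ε' := by gcongr
        have hd2 : -((|M| + ε) / ε') ≤ m / ε' := by
          rw [← neg_div]
          gcongr
        have hceil : (|M| + ε) / ε' ≤ (⌈(|M| + ε) / ε'⌉₊ : ℝ) := Nat.le_ceil _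
        have hmem : k ∈ Ks := by
          rw [hKs, Finset.mem_Icc]
          constructor
          · have : (-(N : ℤ) : ℝ) ≤ (k : ℝ) := by
              push_cast [hk, hNdef]
              linarith
            exact_mod_cast this
          · have : (k : ℝ) ≤ ((N : ℤ) : ℝ) := by
              push_cast [hk, hNdef]
              linarith
            exact_mod_cast this
        have hma : m < (k : ℝ) * ε' := by
          rw [hk]
          push_cast
          rw [← div_lt_iff₀ hε'pos] at *
          · linarith
        have hke : (k : ℝ) * ε' ≤ m + ε' := by
          rw [hk]
          push_cast
          have : (⌊m / ε'⌋ : ℝ) * ε' ≤ m := by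
            rw [← le_div_iff₀ hε'pos]
            exact hf1
          nlinarith
        have hmax : m + ε' < max (x c⁻¹) (x 1) := by
          have habs : max (x c⁻¹) (x 1) - min (x c⁻¹) (x 1) = |x c⁻¹ - x 1| := by
            rw [max_sub_min_eq_abs, abs_sub_comm]
          have : ε' < ε := by
            rw [hε'def]
            linarith
          have := hx
          rw [hm]
          linarith [habs]
        refine Or.inr (Set.mem_biUnion hmem ?_)
        rw [Set.mem_symmDiff]
        have hpremem : x ∈ shiftMap c ⁻¹' {x : G → ℝ | x 1 < (k : ℝ) * ε'} ↔
            x c⁻¹ < (k : ℝ) * ε' := by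
          simp [shiftMap]
        rcases le_total (x c⁻¹) (x 1) with hle | hle
        · have hmeq : m = x c⁻¹ := by rw [hm, min_eq_left hle]
          have hmaxeq : max (x c⁻¹) (x 1) = x 1 := max_eq_right hle
          left
          refine ⟨hpremem.mpr ?_, ?_⟩
          · rw [← hmeq]; exact hma
          · simp only [Set.mem_setOf_eq, not_lt]
            rw [hmaxeq] at hmax
            linarith [hke]
        · have hmeq : m = x 1 := by rw [hm, min_eq_right hle]
          have hmaxeq : max (x c⁻¹) (x 1) = x c⁻¹ := max_eq_left hle
          right
          refine ⟨?_, ?_⟩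
          · simp only [Set.mem_setOf_eq]
            rw [← hmeq]; exact hma
          · rw [hpremem]
            push_neg
            rw [hmaxeq] at hmax
            linarith [hke]
      calc μ {x : G → ℝ | ε ≤ dist (x c⁻¹) (x 1)}
          ≤ μ (({x : G → ℝ | M < |x c⁻¹|} ∪ {x : G → ℝ | M < |x 1|})) +
            μ (⋃ k ∈ Ks, ((shiftMap c ⁻¹' {x : G → ℝ | x 1 < (k : ℝ) * ε'})
              ∆ {x : G → ℝ | x 1 < (k : ℝ) * ε'})) :=
            (measure_mono hsub).trans (measure_union_le _ _)
        _ ≤ (μ {x : G → ℝ | M < |x c⁻¹|} + μ {x : G → ℝ | M < |x 1|}) +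
            ∑ k ∈ Ks, μ ((shiftMap c ⁻¹' {x : G → ℝ | x 1 < (k : ℝ) * ε'})
              ∆ {x : G → ℝ | x 1 < (k : ℝ) * ε'}) := by
            gcongr
            · exact measure_union_le _ _
            · exact measure_biUnion_finset_le _ _
        _ ≤ (η / 2 / 2 + η / 2 / 2) + η / 2 := by
            gcongr
            exact htailc c
        _ = η := by rw [ENNReal.add_halves, ENNReal.add_halves]
    -- transfer back to the process
    have hPμ : ∀ g : G, P {ω | ε ≤ dist (X g ω) (X g₀ ω)}
        = μ {x : G → ℝ | ε ≤ dist (x g) (x g₀)} := by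
      intro g
      have hm : MeasurableSet {x : G → ℝ | ε ≤ dist (x g) (x g₀)} :=
        measurableSet_le measurable_const
          ((measurable_pi_apply g).dist (measurable_pi_apply g₀))
      rw [hμdef, procLaw, Measure.map_apply (measurable_proc X hmeas) hm]
      rfl
    have hμeq : ∀ g : G, μ {x : G → ℝ | ε ≤ dist (x g) (x g₀)}
        = μ {x : G → ℝ | ε ≤ dist (x ((g⁻¹ * g₀)⁻¹)) (x 1)} := by
      intro g
      have hm : MeasurableSet {x : G → ℝ | ε ≤ dist (x ((g⁻¹ * g₀)⁻¹)) (x 1)} :=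
        measurableSet_le measurable_const
          ((measurable_pi_apply _).dist (measurable_pi_apply 1))
      have hpre : shiftMap g₀⁻¹ ⁻¹' {x : G → ℝ | ε ≤ dist (x ((g⁻¹ * g₀)⁻¹)) (x 1)}
          = {x : G → ℝ | ε ≤ dist (x g) (x g₀)} := by
        ext x
        simp [shiftMap, mul_inv_rev, mul_assoc]
      rw [← hpre, procLaw_shift_preimage P X hmeas hstat g₀⁻¹ hm]
    have hcomp : Tendsto (fun g : G => g⁻¹ * g₀) (𝓝 g₀) (𝓝 1) := by
      have hcg : Continuous fun g : G => g⁻¹ * g₀ := continuous_inv.mul continuous_const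
      have := hcg.tendsto g₀
      simpa using this
    have hfinal := hkey.comp hcomp
    have hgoal : (fun g : G => P {ω | ε ≤ dist (X g ω) (X g₀ ω)})
        = fun g : G => μ {x : G → ℝ | ε ≤ dist (x ((g⁻¹ * g₀)⁻¹)) (x 1)} := by
      funext g
      rw [hPμ g, hμeq g]
    rw [hgoal]
    exact hfinal

end Paper
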